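/- arXiv:2310.06730 — 2 statements merged into one kernel-verified Lean document; each statement's English description precedes it below -/
import Mathlib

section
/- Let A ∈ ℝ^{p×K} and W ∈ ℝ^{K×n} both have nonnegative entries with columns summing to 1, and define D₀ = A·W and M₀ = diag(n^{-1} D₀ 𝟏_n). Then for every j ∈ [p], σ_K(Σ_W)·h_j ≤ M₀(j,j) ≤ h_j, where h_j = ∑_{k=1}^K A_{jk} and Σ_W = n^{-1} W Wᵀ and σ_K denotes the smallest eigenvalue. -/
open Matrix

/-- The smallest eigenvalue of a real Hermitian matrix is at most any diagonal entry. -/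
lemma min_eig_le_diag {K : ℕ} (hK : 0 < K) (M : Matrix (Fin K) (Fin K) ℝ)
    (hM : M.IsHermitian) (k : Fin K) :
    Finset.univ.inf' ⟨⟨0, hK⟩, Finset.mem_univ _⟩ hM.eigenvalues ≤ M k k := by
  set U : Matrix (Fin K) (Fin K) ℝ := (hM.eigenvectorUnitary : Matrix (Fin K) (Fin K) ℝ) with hUdef
  have hspec := hM.spectral_theorem
  have hrow : ∑ i, (U k i) ^ 2 = 1 := by
    have hUU : U * star U = 1 := (Matrix.mem_unitaryGroup_iff).mp hM.eigenvectorUnitary.2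
    have := congrFun (congrFun hUU k) k
    simpa [Matrix.mul_apply, Matrix.one_apply, sq, Matrix.star_apply] using this
  have hdiag : M k k = ∑ i, hM.eigenvalues i * (U k i) ^ 2 := by
    conv_lhs => rw [hspec]
    simp [Matrix.mul_apply, Matrix.diagonal_apply, Finset.sum_comm, Matrix.star_apply,
      Finset.mul_sum, Finset.sum_mul]
    apply Finset.sum_congr rfl
    intro i _
    simp only [hUdef, Matrix.IsHermitian.eigenvectorUnitary_apply]
    ring
  rw [hdiag]
  set μ := Finset.univ.inf' ⟨⟨0, hK⟩, Finset.mem_univ _⟩ hM.eigenvalues with hμ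
  calc μ = μ * ∑ i, (U k i) ^ 2 := by rw [hrow, mul_one]
    _ = ∑ i, μ * (U k i) ^ 2 := Finset.mul_sum _ _ _
    _ ≤ ∑ i, hM.eigenvalues i * (U k i) ^ 2 := by
        apply Finset.sum_le_sum
        intro i _
        exact mul_le_mul_of_nonneg_right (Finset.inf'_le _ (Finset.mem_univ i)) (sq_nonneg _)

theorem stmt_3 (p K n : ℕ) (hK : 0 < K) (hn : 0 < n)
    (A : Matrix (Fin p) (Fin K) ℝ) (W : Matrix (Fin K) (Fin n) ℝ)
    (hAnn : ∀ j k, 0 ≤ A j k) (hAcol : ∀ k, ∑ j, A j k = 1)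
    (hWnn : ∀ k i, 0 ≤ W k i) (hWcol : ∀ i, ∑ k, W k i = 1)
    (hH : (((n : ℝ)⁻¹ • (W * Wᵀ)).IsHermitian)) :
    ∀ j : Fin p,
      (Finset.univ.inf' ⟨⟨0, hK⟩, Finset.mem_univ _⟩ hH.eigenvalues) * (∑ k, A j k)
          ≤ (n : ℝ)⁻¹ * (∑ i, (A * W) j i)
      ∧ (n : ℝ)⁻¹ * (∑ i, (A * W) j i) ≤ ∑ k, A j k := by
  intro j
  have hninv : (0:ℝ) < (n : ℝ)⁻¹ := by positivity
  have hWle1 : ∀ k i, W k i ≤ 1 := by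
    intro k i
    calc W k i ≤ ∑ k', W k' i := Finset.single_le_sum (fun k' _ => hWnn k' i) (Finset.mem_univ k)
      _ = 1 := hWcol i
  -- row averages of W
  have hrowle : ∀ k : Fin K, (n : ℝ)⁻¹ * ∑ i, W k i ≤ 1 := by
    intro k
    have : ∑ i, W k i ≤ (n : ℝ) := by
      calc ∑ i, W k i ≤ ∑ _i : Fin n, (1:ℝ) := Finset.sum_le_sum fun i _ => hWle1 k i
        _ = (n : ℝ) := by simp
    calc (n : ℝ)⁻¹ * ∑ i, W k i ≤ (n : ℝ)⁻¹ * (n : ℝ) := by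
          exact mul_le_mul_of_nonneg_left this hninv.le
      _ = 1 := by field_simp
  set μ := Finset.univ.inf' ⟨⟨0, hK⟩, Finset.mem_univ _⟩ hH.eigenvalues with hμ
  have hμle : ∀ k : Fin K, μ ≤ (n : ℝ)⁻¹ * ∑ i, W k i := by
    intro k
    have h1 := min_eig_le_diag hK _ hH k
    have hdiag : ((n : ℝ)⁻¹ • (W * Wᵀ)) k k = (n : ℝ)⁻¹ * ∑ i, W k i * W k i := by
      simp [Matrix.mul_apply, Matrix.transpose_apply]
    have h2 : (n : ℝ)⁻¹ * ∑ i, W k i * W k i ≤ (n : ℝ)⁻¹ * ∑ i, W k i := by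
      apply mul_le_mul_of_nonneg_left _ hninv.le
      apply Finset.sum_le_sum
      intro i _
      exact mul_le_of_le_one_right (hWnn k i) (hWle1 k i)
    exact le_trans (hdiag ▸ h1) h2
  have hkey : (n : ℝ)⁻¹ * (∑ i, (A * W) j i) = ∑ k, A j k * ((n : ℝ)⁻¹ * ∑ i, W k i) := by
    simp only [Matrix.mul_apply]
    rw [Finset.sum_comm]
    rw [Finset.mul_sum]
    apply Finset.sum_congr rfl
    intro k _
    rw [Finset.mul_sum, Finset.mul_sum, Finset.mul_sum]
    apply Finset.sum_congr rfl
    intro i _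
    ring
  constructor
  · rw [hkey, Finset.mul_sum]
    apply Finset.sum_le_sum
    intro k _
    rw [mul_comm μ (A j k)]
    exact mul_le_mul_of_nonneg_left (hμle k) (hAnn j k)
  · rw [hkey]
    calc ∑ k, A j k * ((n : ℝ)⁻¹ * ∑ i, W k i) ≤ ∑ k, A j k * 1 :=
          Finset.sum_le_sum fun k _ => mul_le_mul_of_nonneg_left (hrowle k) (hAnn j k)
      _ = ∑ k, A j k := by simp
end

section
/- Let a₁ ≥ a₂ ≥ … ≥ a_p ≥ 0 be nonnegative reals satisfying j·a_j^q ≤ s for all j ∈ [p], where q ∈ (0,1) and s > 0. Then for any τ > 0, ∑_{j=1}^p min(a_j, τ) ≤ (1/(1−q)) · s · τ^{1−q}. -/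
open MeasureTheory Set intervalIntegral

lemma layer_eq_aux (a τ : ℝ) (ha : 0 ≤ a) (hτ : 0 ≤ τ) :
    ∫ u in (0:ℝ)..τ, Set.indicator (Set.Iio a) (fun _ => (1:ℝ)) u = min a τ := by
  rw [intervalIntegral.integral_of_le hτ,
    MeasureTheory.setIntegral_indicator measurableSet_Iio]
  rcases le_or_gt a τ with h | h
  · have hset : Set.Ioc (0:ℝ) τ ∩ Set.Iio a = Set.Ioo 0 a := by
      ext x
      simp only [Set.mem_inter_iff, Set.mem_Ioc, Set.mem_Iio, Set.mem_Ioo]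
      constructor
      · rintro ⟨⟨h1, _⟩, h3⟩; exact ⟨h1, h3⟩
      · rintro ⟨h1, h2⟩; exact ⟨⟨h1, le_trans h2.le h⟩, h2⟩
    rw [hset, min_eq_left h]
    simp [Real.volume_Ioo, ha]
  · have hset : Set.Ioc (0:ℝ) τ ∩ Set.Iio a = Set.Ioc 0 τ := by
      apply Set.inter_eq_left.mpr
      intro x hx; exact lt_of_le_of_lt hx.2 h
    rw [hset, min_eq_right h.le]
    simp [Real.volume_Ioc, hτ]

theorem stmt_5 (p : ℕ) (q s τ : ℝ) (hq0 : 0 < q) (hq1 : q < 1) (hs : 0 < s) (hτ : 0 < τ)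
    (a : Fin p → ℝ) (hnn : ∀ j, 0 ≤ a j)
    (hord : ∀ i j : Fin p, i ≤ j → a j ≤ a i)
    (hsp : ∀ j : Fin p, ((j : ℕ) + 1 : ℝ) * (a j) ^ q ≤ s) :
    ∑ j, min (a j) τ ≤ (1 / (1 - q)) * s * τ ^ (1 - q) := by
  have hint : ∀ j : Fin p, IntervalIntegrable
      (fun u => Set.indicator (Set.Iio (a j)) (fun _ => (1:ℝ)) u) volume 0 τ := by
    intro j
    rw [intervalIntegrable_iff_integrableOn_Ioc_of_le hτ.le]
    exact (integrableOn_const measure_Ioc_lt_top.ne).indicator measurableSet_Iio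
  have hrpow : IntervalIntegrable (fun u : ℝ => s * u ^ (-q)) volume 0 τ :=
    (intervalIntegral.intervalIntegrable_rpow' (by linarith)).const_mul s
  have hstep1 : ∑ j, min (a j) τ
      = ∫ u in (0:ℝ)..τ, ∑ j, Set.indicator (Set.Iio (a j)) (fun _ => (1:ℝ)) u := by
    rw [intervalIntegral.integral_finset_sum (fun j _ => hint j)]
    exact Finset.sum_congr rfl fun j _ => (layer_eq_aux (a j) τ (hnn j) hτ.le).symm
  have hmono : (∫ u in (0:ℝ)..τ, ∑ j, Set.indicator (Set.Iio (a j)) (fun _ => (1:ℝ)) u)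
      ≤ ∫ u in (0:ℝ)..τ, s * u ^ (-q) := by
    have hFint : IntervalIntegrable
        (fun u => ∑ j, Set.indicator (Set.Iio (a j)) (fun _ => (1:ℝ)) u) volume 0 τ := by
      have h := IntervalIntegrable.sum Finset.univ (fun (j : Fin p) _ => hint j)
      have heq : (∑ i : Fin p, fun u => Set.indicator (Set.Iio (a i)) (fun _ => (1:ℝ)) u)
          = fun u => ∑ j : Fin p, Set.indicator (Set.Iio (a j)) (fun _ => (1:ℝ)) u := by
        funext u; simp
      exact heq ▸ h
    apply intervalIntegral.integral_mono_ae_restrict hτ.le hFint hrpow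
    have h0 : ∀ᵐ u ∂(volume.restrict (Set.Icc (0:ℝ) τ)), u ≠ 0 := by
      refine MeasureTheory.ae_restrict_of_ae ?_
      rw [MeasureTheory.ae_iff]
      simpa using measure_singleton (0:ℝ)
    have hmem : ∀ᵐ u ∂(volume.restrict (Set.Icc (0:ℝ) τ)), u ∈ Set.Icc (0:ℝ) τ :=
      MeasureTheory.ae_restrict_mem measurableSet_Icc
    filter_upwards [h0, hmem] with u hu0 humem
    have hu : 0 < u := lt_of_le_of_ne humem.1 (Ne.symm hu0)
    have hsum : ∑ j, Set.indicator (Set.Iio (a j)) (fun _ => (1:ℝ)) u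
        = ((Finset.univ.filter (fun j : Fin p => u < a j)).card : ℝ) := by
      simp only [Set.indicator_apply, Set.mem_Iio]
      rw [Finset.sum_boole]
    rw [hsum]
    have hupos : (0:ℝ) < u ^ q := Real.rpow_pos_of_pos hu q
    have hrw : s * u ^ (-q) = s / u ^ q := by
      rw [Real.rpow_neg hu.le, div_eq_mul_inv]
    rw [hrw, le_div_iff₀ hupos]
    set S := Finset.univ.filter (fun j : Fin p => u < a j) with hS
    rcases S.eq_empty_or_nonempty with he | hne
    · rw [he]; simp; positivity
    · have hj0mem := S.max'_mem hne
      set j₀ := S.max' hne with hj₀def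
      have hj₀ : u < a j₀ := (Finset.mem_filter.mp hj0mem).2
      have hcard : (S.card : ℝ) ≤ ((j₀ : ℕ) + 1 : ℝ) := by
        have hsub : S ⊆ Finset.Iic j₀ := fun j hj => Finset.mem_Iic.mpr (S.le_max' j hj)
        have := Finset.card_le_card hsub
        have hIic : (Finset.Iic j₀).card = (j₀ : ℕ) + 1 := by
          simpa using Fin.card_Iic j₀
        rw [hIic] at this
        exact_mod_cast this
      have h1 : ((j₀ : ℕ) + 1 : ℝ) * u ^ q ≤ s := by
        calc ((j₀ : ℕ) + 1 : ℝ) * u ^ q ≤ ((j₀ : ℕ) + 1 : ℝ) * (a j₀) ^ q := by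
              apply mul_le_mul_of_nonneg_left (Real.rpow_le_rpow hu.le hj₀.le hq0.le)
              positivity
          _ ≤ s := hsp j₀
      calc (S.card : ℝ) * u ^ q ≤ ((j₀ : ℕ) + 1 : ℝ) * u ^ q :=
            mul_le_mul_of_nonneg_right hcard hupos.le
        _ ≤ s := h1
  have hcomp : (∫ u in (0:ℝ)..τ, s * u ^ (-q)) = (1 / (1 - q)) * s * τ ^ (1 - q) := by
    rw [intervalIntegral.integral_const_mul, integral_rpow (Or.inl (by linarith))]
    rw [Real.zero_rpow (by linarith : -q + 1 ≠ 0)]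
    have : -q + 1 = 1 - q := by ring
    rw [this]
    field_simp
    simp
  calc ∑ j, min (a j) τ = _ := hstep1
    _ ≤ _ := hmono
    _ = _ := hcomp
end
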